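/- arXiv:1910.02589 — 2 statements merged into one kernel-verified Lean document; each statement's English description precedes it below -/
import Mathlib

section
/- Let f₁, f₂ ∈ O_K[x] be monic irreducible polynomials all of whose roots in K̄ have strictly positive valuation. Suppose f₁ is not Eisenstein and deg f₁ ≥ 3, and f₂ is Eisenstein with deg f₂ ≥ 2. Then ν_K(Res(f₁,f₂)) ≥ 3. -/
open Polynomial

/-- A monic polynomial `f = x^d + a_{d-1}x^{d-1} + ⋯ + a₀ ∈ O_K[x]` is *Eisenstein*
(with respect to the valuation `v` on an algebraic closure `Kbar` of `K`) if
`ν_K(a_i) ≥ 1` for all `i < d` and `ν_K(a₀) = 1`. -/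
def IsEisensteinPoly {K Kbar : Type*} [Field K] [Field Kbar] [Algebra K Kbar]
    (v : Kbar → ℚ) (f : Polynomial K) : Prop :=
  f.Monic ∧
  (∀ i < f.natDegree, f.coeff i ≠ 0 → 1 ≤ v (algebraMap K Kbar (f.coeff i))) ∧
  f.coeff 0 ≠ 0 ∧ v (algebraMap K Kbar (f.coeff 0)) = 1

/-- The valuation of the resultant of two monic polynomials with no common root:
`ν_K(Res(f₁,f₂)) = Σ_{i,j} ν(α_i − β_j)` over the roots `α_i` of `f₁` and `β_j`
of `f₂` in `Kbar` (with multiplicity). -/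
noncomputable def resultantVal {K Kbar : Type*} [Field K] [Field Kbar] [Algebra K Kbar]
    (v : Kbar → ℚ) (f₁ f₂ : Polynomial K) : ℚ :=
  (((f₁.map (algebraMap K Kbar)).roots).map (fun α =>
    (((f₂.map (algebraMap K Kbar)).roots).map (fun β => v (α - β))).sum)).sum

section Helpers
variable {Kbar : Type*} [Field Kbar] (v : Kbar → ℚ)
variable (hv_mul : ∀ x y : Kbar, x ≠ 0 → y ≠ 0 → v (x * y) = v x + v y)
variable (hv_add : ∀ x y : Kbar, x ≠ 0 → y ≠ 0 → x + y ≠ 0 → min (v x) (v y) ≤ v (x + y))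

include hv_mul

theorem v_one' : v 1 = 0 := by
  have := hv_mul 1 1 one_ne_zero one_ne_zero
  simp at this; linarith

theorem v_neg' (x : Kbar) (hx : x ≠ 0) : v (-x) = v x := by
  have h1 : v ((-1 : Kbar) * (-1)) = v (-1) + v (-1) :=
    hv_mul _ _ (by norm_num) (by norm_num)
  simp at h1
  rw [v_one' v hv_mul] at h1
  have h2 : v ((-1 : Kbar) * x) = v (-1) + v x := hv_mul _ _ (by norm_num) hx
  rw [neg_one_mul] at h2
  rw [h2]; linarith

theorem v_pow' (x : Kbar) (hx : x ≠ 0) (n : ℕ) : v (x ^ n) = n * v x := by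
  induction n with
  | zero => simpa using v_one' v hv_mul
  | succ n ih =>
    rw [pow_succ, hv_mul _ _ (pow_ne_zero _ hx) hx, ih]
    push_cast; ring

theorem v_prod' (s : Multiset Kbar) (hs : ∀ x ∈ s, x ≠ 0) :
    v s.prod = (s.map v).sum := by
  induction s using Multiset.induction with
  | empty => simpa using v_one' v hv_mul
  | cons a s ih =>
    have ha : a ≠ 0 := hs a (Multiset.mem_cons_self a s)
    have hs' : ∀ x ∈ s, x ≠ 0 := fun x hx => hs x (Multiset.mem_cons_of_mem hx)
    have hp : s.prod ≠ 0 := Multiset.prod_ne_zero fun h => hs' 0 h rfl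
    rw [Multiset.prod_cons, hv_mul a s.prod ha hp, ih hs', Multiset.map_cons,
      Multiset.sum_cons]

include hv_add

set_option linter.unusedSectionVars false in
theorem v_sum_ge' (c : ℚ) (s : Multiset Kbar) (hsum : s.sum ≠ 0)
    (h : ∀ x ∈ s, x ≠ 0 → c ≤ v x) : c ≤ v s.sum := by
  induction s using Multiset.induction with
  | empty => simp at hsum
  | cons a s ih =>
    rw [Multiset.sum_cons] at hsum ⊢
    by_cases ha : a = 0
    · subst ha; rw [zero_add] at hsum ⊢
      exact ih hsum fun x hx => h x (Multiset.mem_cons_of_mem hx)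
    · by_cases hss : s.sum = 0
      · rw [hss, add_zero] at hsum ⊢
        exact h a (Multiset.mem_cons_self a s) ha
      · refine le_trans (le_min (h a (Multiset.mem_cons_self a s) ha)
          (ih hss fun x hx => h x (Multiset.mem_cons_of_mem hx))) ?_
        exact hv_add a s.sum ha hss hsum

theorem v_finsum_ge' {ι : Type*} (c : ℚ) (s : Finset ι) (f : ι → Kbar)
    (hsum : ∑ i ∈ s, f i ≠ 0) (h : ∀ i ∈ s, f i ≠ 0 → c ≤ v (f i)) :
    c ≤ v (∑ i ∈ s, f i) := by
  have hrw : (∑ i ∈ s, f i) = (s.val.map f).sum := rfl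
  rw [hrw] at hsum ⊢
  refine v_sum_ge' v hv_mul hv_add c _ hsum ?_
  intro x hx hxne
  obtain ⟨i, hi, rfl⟩ := Multiset.mem_map.mp hx
  exact h i hi hxne

end Helpers

theorem resultant_val_ge_three_of_eisenstein'
    {K Kbar : Type*} [Field K] [Field Kbar] [Algebra K Kbar] [IsAlgClosure K Kbar]
    (v : Kbar → ℚ)
    (hv_mul : ∀ x y : Kbar, x ≠ 0 → y ≠ 0 → v (x * y) = v x + v y)
    (hv_add : ∀ x y : Kbar, x ≠ 0 → y ≠ 0 → x + y ≠ 0 → min (v x) (v y) ≤ v (x + y))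
    (hv_int : ∀ x : K, x ≠ 0 → ∃ n : ℤ, v (algebraMap K Kbar x) = (n : ℚ))
    (f₁ f₂ : Polynomial K)
    (hmon₁ : f₁.Monic) (hmon₂ : f₂.Monic)
    (hirr₁ : Irreducible f₁) (hirr₂ : Irreducible f₂)
    (hpos₁ : ∀ α ∈ (f₁.map (algebraMap K Kbar)).roots, 0 < v α)
    (hpos₂ : ∀ β ∈ (f₂.map (algebraMap K Kbar)).roots, 0 < v β)
    (hf₁ : ¬ IsEisensteinPoly v f₁) (hdeg₁ : 3 ≤ f₁.natDegree)
    (hf₂ : IsEisensteinPoly v f₂) (hdeg₂ : 2 ≤ f₂.natDegree) :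
    3 ≤ resultantVal v f₁ f₂ := by
  classical
  obtain ⟨hmonE₂, hE₂coeff, hE₂c0ne, hE₂c0⟩ := id hf₂
  unfold resultantVal
  set φ := algebraMap K Kbar with hφdef
  have hinj : Function.Injective φ := φ.injective
  haveI : IsAlgClosed Kbar := IsAlgClosure.isAlgClosed K
  set F₁ := f₁.map φ with hF₁def
  set F₂ := f₂.map φ with hF₂def
  have hM₁ : F₁.Monic := hmon₁.map φ
  have hM₂ : F₂.Monic := hmon₂.map φ
  have hF₁ne : F₁ ≠ 0 := hM₁.ne_zero
  have hF₂ne : F₂ ≠ 0 := hM₂.ne_zero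
  set d := f₁.natDegree with hddef
  set e := f₂.natDegree with hedef
  have hdF₁ : F₁.natDegree = d := hmon₁.natDegree_map φ
  have hdF₂ : F₂.natDegree = e := hmon₂.natDegree_map φ
  set r₁ := F₁.roots with hr₁def
  set r₂ := F₂.roots with hr₂def
  have hsp₁ : F₁.Splits := IsAlgClosed.splits F₁
  have hsp₂ : F₂.Splits := IsAlgClosed.splits F₂
  have hcard₁ : Multiset.card r₁ = d := by
    have h := hsp₁.natDegree_eq_card_roots
    rw [hr₁def, ← h, hdF₁]
  have hcard₂ : Multiset.card r₂ = e := by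
    have h := hsp₂.natDegree_eq_card_roots
    rw [hr₂def, ← h, hdF₂]
  have hd3 : (3:ℚ) ≤ (d:ℚ) := by exact_mod_cast hdeg₁
  have he2 : (2:ℚ) ≤ (e:ℚ) := by exact_mod_cast hdeg₂
  have hE : (0:ℚ) < (e:ℚ) := by linarith
  -- roots give aeval zero
  have haev₁ : ∀ α ∈ r₁, Polynomial.aeval α f₁ = 0 := by
    intro α hα
    have h := (Polynomial.mem_roots'.mp hα).2
    rwa [Polynomial.IsRoot, hF₁def, Polynomial.eval_map, ← Polynomial.aeval_def] at h
  have haev₂ : ∀ β ∈ r₂, Polynomial.aeval β f₂ = 0 := by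
    intro β hβ
    have h := (Polynomial.mem_roots'.mp hβ).2
    rwa [Polynomial.IsRoot, hF₂def, Polynomial.eval_map, ← Polynomial.aeval_def] at h
  -- no common roots
  have hne : ∀ α ∈ r₁, ∀ β ∈ r₂, α ≠ β := by
    intro α hα β hβ h
    subst h
    have h1 : f₁ = minpoly K α := minpoly.eq_of_irreducible_of_monic hirr₁ (haev₁ α hα) hmon₁
    have h2 : f₂ = minpoly K α := minpoly.eq_of_irreducible_of_monic hirr₂ (haev₂ α hβ) hmon₂
    exact hf₁ (by rw [h1, ← h2]; exact hf₂)
  -- f₁.coeff 0 ≠ 0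
  have hc0ne : f₁.coeff 0 ≠ 0 := by
    intro hc
    obtain ⟨q, hq⟩ := Polynomial.X_dvd_iff.mpr hc
    have hqne : q ≠ 0 := by
      intro h; rw [h, mul_zero] at hq; exact hmon₁.ne_zero hq
    rcases hirr₁.isUnit_or_isUnit hq with h | h
    · exact Polynomial.not_isUnit_X h
    · have hq0 : q.natDegree = 0 := Polynomial.natDegree_eq_zero_of_isUnit h
      have : f₁.natDegree = 1 := by
        rw [hq, Polynomial.natDegree_mul Polynomial.X_ne_zero hqne,
          Polynomial.natDegree_X, hq0]
      omega
  -- roots are nonzero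
  have h0₁ : ∀ α ∈ r₁, α ≠ 0 := by
    intro α hα h0
    subst h0
    have h := (Polynomial.mem_roots'.mp hα).2
    rw [Polynomial.IsRoot, ← Polynomial.coeff_zero_eq_eval_zero] at h
    rw [hF₁def, Polynomial.coeff_map] at h
    exact hc0ne (hinj (by rw [h, map_zero]))
  have h0₂ : ∀ β ∈ r₂, β ≠ 0 := by
    intro β hβ h0
    subst h0
    have h := (Polynomial.mem_roots'.mp hβ).2
    rw [Polynomial.IsRoot, ← Polynomial.coeff_zero_eq_eval_zero] at h
    rw [hF₂def, Polynomial.coeff_map] at h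
    exact hE₂c0ne (hinj (by rw [h, map_zero]))
  -- factorisation of F₁
  have hprod₁ : F₁ = (r₁.map fun a => X - C a).prod :=
    hsp₁.eq_prod_roots_of_monic hM₁
  -- uniform positive lower bound on valuations of roots of f₁
  obtain ⟨c, hcpos, hcle⟩ : ∃ c : ℚ, 0 < c ∧ ∀ x ∈ r₁, c ≤ v x := by
    have hr₁ne : r₁ ≠ 0 := by
      intro h
      rw [h] at hcard₁; simp at hcard₁; omega
    have hTne : (r₁.map v).toFinset.Nonempty := by
      rw [Multiset.toFinset_nonempty]
      simpa [Multiset.map_eq_zero] using hr₁ne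
    refine ⟨(r₁.map v).toFinset.min' hTne, ?_, ?_⟩
    · have hmem := (r₁.map v).toFinset.min'_mem hTne
      rw [Multiset.mem_toFinset, Multiset.mem_map] at hmem
      obtain ⟨x, hx, hxv⟩ := hmem
      rw [← hxv]
      exact hpos₁ x hx
    · intro x hx
      exact Finset.min'_le _ _ (by rw [Multiset.mem_toFinset, Multiset.mem_map]; exact ⟨x, hx, rfl⟩)
  -- coefficients of f₁ have valuation ≥ 1
  have hc1 : ∀ i < d, f₁.coeff i ≠ 0 → 1 ≤ v (φ (f₁.coeff i)) := by
    intro i hi hne0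
    have hφne : φ (f₁.coeff i) ≠ 0 := fun h => hne0 (hinj (by rw [h, map_zero]))
    have hcoeffF : F₁.coeff i = φ (f₁.coeff i) := Polynomial.coeff_map φ i
    have hk : i ≤ Multiset.card r₁ := by omega
    have hvieta := Multiset.prod_X_sub_C_coeff r₁ hk
    rw [← hprod₁] at hvieta
    set k := Multiset.card r₁ - i with hkdef
    have hk1 : 1 ≤ k := by omega
    have hesne : r₁.esymm k ≠ 0 := by
      intro h
      rw [h, mul_zero] at hvieta
      exact hφne (by rw [← hcoeffF, hvieta])
    have hvpos : 0 < v (φ (f₁.coeff i)) := by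
      have hvneg : v ((-1:Kbar)^k * r₁.esymm k) = v (r₁.esymm k) := by
        rw [hv_mul _ _ (pow_ne_zero _ (by norm_num)) hesne,
          v_pow' v hv_mul (-1) (by norm_num)]
        have : v (-1 : Kbar) = 0 := by
          have := v_neg' v hv_mul 1 one_ne_zero
          rw [v_one' v hv_mul] at this; exact this
        rw [this]; ring
      have hges : c ≤ v (r₁.esymm k) := by
        have hesne' : ((r₁.powersetCard k).map Multiset.prod).sum ≠ 0 := by
          rw [← Multiset.esymm]; exact hesne
        have := v_sum_ge' v hv_mul hv_add c _ hesne' ?_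
        · rw [Multiset.esymm]; exact this
        · intro x hx hxne
          obtain ⟨t, ht, rfl⟩ := Multiset.mem_map.mp hx
          obtain ⟨hts, htc⟩ := Multiset.mem_powersetCard.mp ht
          have htne : ∀ y ∈ t, y ≠ 0 := fun y hy => h0₁ y (Multiset.mem_of_le hts hy)
          rw [v_prod' v hv_mul t htne]
          have h1 : Multiset.card (t.map v) • c ≤ (t.map v).sum := by
            apply Multiset.card_nsmul_le_sum
            intro q hq
            obtain ⟨y, hy, rfl⟩ := Multiset.mem_map.mp hq
            exact hcle y (Multiset.mem_of_le hts hy)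
          rw [Multiset.card_map, htc, nsmul_eq_mul] at h1
          have hk1' : (1:ℚ) ≤ (k:ℚ) := by exact_mod_cast hk1
          nlinarith
      rw [← hcoeffF, hvieta, hvneg]
      linarith
    obtain ⟨n, hn⟩ := hv_int _ hne0
    rw [hφdef] at hvpos hn ⊢
    rw [hn] at hvpos ⊢
    have : (1:ℤ) ≤ n := by exact_mod_cast hvpos
    exact_mod_cast this
  -- constant coefficient of f₁ has valuation ≥ 2
  have hc0₂ : 2 ≤ v (φ (f₁.coeff 0)) := by
    have h1 : 1 ≤ v (φ (f₁.coeff 0)) := hc1 0 (by omega) hc0ne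
    have hne1 : v (φ (f₁.coeff 0)) ≠ 1 := by
      intro h
      exact hf₁ ⟨hmon₁, fun i hi hci => hc1 i hi hci, hc0ne, h⟩
    obtain ⟨n, hn⟩ := hv_int _ hc0ne
    rw [hφdef] at h1 hne1 ⊢
    rw [hn] at h1 hne1 ⊢
    have hn1 : (1:ℤ) ≤ n := by exact_mod_cast h1
    have hn2 : n ≠ 1 := by exact_mod_cast hne1
    have : (2:ℤ) ≤ n := by omega
    exact_mod_cast this
  -- roots of f₂ have valuation ≥ 1/e
  have hvβ : ∀ β ∈ r₂, 1 ≤ v β * e := by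
    intro β hβ
    have hβ0 : β ≠ 0 := h0₂ β hβ
    have heval : Polynomial.eval β F₂ = 0 := (Polynomial.mem_roots'.mp hβ).2
    rw [Polynomial.eval_eq_sum_range, hdF₂, Finset.sum_range_succ] at heval
    have hcoefe : F₂.coeff e = 1 := by rw [← hdF₂]; exact hM₂.coeff_natDegree
    rw [hcoefe, one_mul] at heval
    have hsum : (∑ i ∈ Finset.range e, F₂.coeff i * β ^ i) = -β ^ e :=
      eq_neg_of_add_eq_zero_left heval
    have hge : (1:ℚ) ≤ v (∑ i ∈ Finset.range e, F₂.coeff i * β ^ i) := by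
      apply v_finsum_ge' v hv_mul hv_add
      · rw [hsum]; exact neg_ne_zero.mpr (pow_ne_zero _ hβ0)
      · intro i hi hine
        have hciφ : F₂.coeff i ≠ 0 := by
          intro h; exact hine (by rw [h, zero_mul])
        have hci : f₂.coeff i ≠ 0 := by
          intro h; exact hciφ (by rw [hF₂def, Polynomial.coeff_map, h, map_zero])
        rw [hv_mul _ _ hciφ (pow_ne_zero _ hβ0), v_pow' v hv_mul β hβ0]
        have h1 : 1 ≤ v (F₂.coeff i) := by
          rw [hF₂def, Polynomial.coeff_map]
          exact hE₂coeff i (Finset.mem_range.mp hi) hci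
        have h2 : 0 ≤ (i:ℚ) * v β :=
          mul_nonneg (by positivity) (le_of_lt (hpos₂ β hβ))
        linarith
    rw [hsum, v_neg' v hv_mul _ (pow_ne_zero _ hβ0), v_pow' v hv_mul β hβ0] at hge
    nlinarith
  -- valuation of f₁ at each root of f₂
  have hFβ : ∀ β ∈ r₂, 3 / (e:ℚ) ≤ v (Polynomial.eval β F₁) := by
    intro β hβ
    have hβ0 := h0₂ β hβ
    have hvb := hvβ β hβ
    have hvbpos := hpos₂ β hβ
    have hevne : Polynomial.eval β F₁ ≠ 0 := by
      intro h
      have hmem : β ∈ r₁ := by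
        rw [hr₁def, Polynomial.mem_roots']; exact ⟨hF₁ne, h⟩
      exact hne β hmem β hβ rfl
    rw [Polynomial.eval_eq_sum_range, hdF₁] at hevne ⊢
    apply v_finsum_ge' v hv_mul hv_add _ _ _ hevne
    intro i hi hine
    have hciφ : F₁.coeff i ≠ 0 := by
      intro h; exact hine (by rw [h, zero_mul])
    rw [hv_mul _ _ hciφ (pow_ne_zero _ hβ0), v_pow' v hv_mul β hβ0]
    have hmem : i < d + 1 := Finset.mem_range.mp hi
    rw [div_le_iff₀ hE]
    rcases eq_or_lt_of_le (Nat.lt_succ_iff.mp hmem) with hieq | hilt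
    · -- top coefficient
      have hcoefd : F₁.coeff i = 1 := by
        rw [hieq, ← hdF₁]; exact hM₁.coeff_natDegree
      rw [hcoefd, v_one' v hv_mul, hieq]
      have : (3:ℚ) * 1 ≤ (d:ℚ) * (v β * e) :=
        mul_le_mul hd3 hvb (by norm_num) (by linarith)
      nlinarith
    · have hci : f₁.coeff i ≠ 0 := by
        intro h; exact hciφ (by rw [hF₁def, Polynomial.coeff_map, h, map_zero])
      have hvF : v (F₁.coeff i) = v (φ (f₁.coeff i)) := by
        rw [hF₁def, Polynomial.coeff_map]
      rcases Nat.eq_zero_or_pos i with h0 | h0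
      · subst h0
        have h2 : 2 ≤ v (F₁.coeff 0) := by rw [hvF]; exact hc0₂
        push_cast
        nlinarith
      · have h1 : 1 ≤ v (F₁.coeff i) := by rw [hvF]; exact hc1 i hilt hci
        have hi1 : (1:ℚ) ≤ (i:ℚ) := by exact_mod_cast h0
        have hA : v (F₁.coeff i) * e ≥ 1 * 2 :=
          mul_le_mul h1 he2 (by norm_num) (by linarith)
        have hB : (1:ℚ) * 1 ≤ (i:ℚ) * (v β * e) :=
          mul_le_mul hi1 hvb (by norm_num) (by linarith)
        nlinarith
  -- assemble
  rw [Multiset.sum_map_sum_map r₁ r₂]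
  have hstep : ∀ β ∈ r₂, (r₁.map fun α => v (α - β)).sum = v (Polynomial.eval β F₁) := by
    intro β hβ
    have hfac : Polynomial.eval β F₁ = (r₁.map fun α => β - α).prod := by
      conv_lhs => rw [hprod₁]
      rw [Polynomial.eval_multiset_prod, Multiset.map_map]
      simp
    have hfne : ∀ x ∈ r₁.map fun α => β - α, x ≠ 0 := by
      intro x hx
      obtain ⟨α, hα, rfl⟩ := Multiset.mem_map.mp hx
      exact sub_ne_zero.mpr (Ne.symm (hne α hα β hβ))
    rw [hfac, v_prod' v hv_mul _ hfne, Multiset.map_map]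
    apply congrArg Multiset.sum
    apply Multiset.map_congr rfl
    intro α hα
    simp only [Function.comp]
    rw [← neg_sub β α, v_neg' v hv_mul _ (sub_ne_zero.mpr (Ne.symm (hne α hα β hβ)))]
  have hrw := congrArg Multiset.sum (Multiset.map_congr rfl hstep)
  rw [hrw]
  have hb : ∀ x ∈ r₂.map fun β => v (Polynomial.eval β F₁), 3 / (e:ℚ) ≤ x := by
    intro x hx
    obtain ⟨β, hβ, rfl⟩ := Multiset.mem_map.mp hx
    exact hFβ β hβ
  have hfin := Multiset.card_nsmul_le_sum hb
  rw [Multiset.card_map, hcard₂, nsmul_eq_mul] at hfin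
  calc (3:ℚ) = (e:ℚ) * (3 / (e:ℚ)) := by field_simp
    _ ≤ _ := hfin


/-- Let `K` be a field, Henselian with respect to a discrete valuation
`ν_K` with algebraically closed residue field, with fixed algebraic closure `Kbar` and
(unique, Galois-invariant) extension `v` of `ν_K`, normalized so that a uniformizer
`πK` satisfies `v πK = 1` and `v` is `ℤ`-valued on `K`.
Let `f₁, f₂ ∈ O_K[x]` be monic irreducible polynomials all of whose roots in `Kbar`
have strictly positive valuation.  Suppose `f₁` is not Eisenstein and `deg f₁ ≥ 3`,
and `f₂` is Eisenstein with `deg f₂ ≥ 2`.  Then `ν_K(Res(f₁,f₂)) ≥ 3`. -/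
theorem resultant_val_ge_three_of_eisenstein
    {K Kbar : Type*} [Field K] [Field Kbar] [Algebra K Kbar] [IsAlgClosure K Kbar]
    (v : Kbar → ℚ)
    (hv_mul : ∀ x y : Kbar, x ≠ 0 → y ≠ 0 → v (x * y) = v x + v y)
    (hv_add : ∀ x y : Kbar, x ≠ 0 → y ≠ 0 → x + y ≠ 0 → min (v x) (v y) ≤ v (x + y))
    (hv_gal : ∀ (σ : Kbar ≃ₐ[K] Kbar) (x : Kbar), v (σ x) = v x)
    (hv_int : ∀ x : K, x ≠ 0 → ∃ n : ℤ, v (algebraMap K Kbar x) = (n : ℚ))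
    (πK : K) (hπK : πK ≠ 0 ∧ v (algebraMap K Kbar πK) = 1)
    (hv_res : ∀ x : Kbar, x ≠ 0 → 0 ≤ v x →
      ∃ η : K, x = algebraMap K Kbar η ∨ 0 < v (x - algebraMap K Kbar η))
    (f₁ f₂ : Polynomial K)
    (hmon₁ : f₁.Monic) (hmon₂ : f₂.Monic)
    (hirr₁ : Irreducible f₁) (hirr₂ : Irreducible f₂)
    (hcoeff₁ : ∀ n, f₁.coeff n ≠ 0 → 0 ≤ v (algebraMap K Kbar (f₁.coeff n)))
    (hcoeff₂ : ∀ n, f₂.coeff n ≠ 0 → 0 ≤ v (algebraMap K Kbar (f₂.coeff n)))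
    (hpos₁ : ∀ α ∈ (f₁.map (algebraMap K Kbar)).roots, 0 < v α)
    (hpos₂ : ∀ β ∈ (f₂.map (algebraMap K Kbar)).roots, 0 < v β)
    (hf₁ : ¬ IsEisensteinPoly v f₁) (hdeg₁ : 3 ≤ f₁.natDegree)
    (hf₂ : IsEisensteinPoly v f₂) (hdeg₂ : 2 ≤ f₂.natDegree) :
    3 ≤ resultantVal v f₁ f₂ := by
  exact resultant_val_ge_three_of_eisenstein' v hv_mul hv_add hv_int f₁ f₂
    hmon₁ hmon₂ hirr₁ hirr₂ hpos₁ hpos₂ hf₁ hdeg₁ hf₂ hdeg₂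
end

section
/- Let b/c be a rational number in lowest terms with 0 < b/c ≤ 1 (b ≥ 1, c ≥ 1, gcd(b,c) = 1). Then every shortest 1-path from b/c to 0 has at most b + 1 entries. -/
def IsNPath (N : ℕ) (a a' : ℚ) (l : List ℚ) : Prop :=
  l.head? = some a ∧ l.getLast? = some a' ∧
  l.Chain' (fun x y => x > y ∧
    x - y = (N : ℚ) / ((Nat.lcm N x.den : ℚ) * (Nat.lcm N y.den : ℚ)))

def IsShortestNPath (N : ℕ) (a a' : ℚ) (l : List ℚ) : Prop :=
  IsNPath N a a' l ∧
  ∀ l' : List ℚ, l'.Sublist l → l' ≠ l → a ∈ l' → a' ∈ l' → ¬ IsNPath N a a' l'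

def R1 (x y : ℚ) : Prop := x > y ∧ x - y = 1 / ((x.den : ℚ) * (y.den : ℚ))

lemma isNPath_one_iff (a a' : ℚ) (l : List ℚ) :
    IsNPath 1 a a' l ↔ (l.head? = some a ∧ l.getLast? = some a' ∧ l.Chain' R1) := by
  unfold IsNPath R1
  have hrel : (fun x y : ℚ => x > y ∧
      x - y = ((1:ℕ) : ℚ) / ((Nat.lcm 1 x.den : ℚ) * (Nat.lcm 1 y.den : ℚ))) =
      fun x y : ℚ => x > y ∧ x - y = 1 / ((x.den : ℚ) * (y.den : ℚ)) := by
    funext x y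
    rw [Nat.lcm_one_left, Nat.lcm_one_left, Nat.cast_one]
  rw [hrel]

lemma cross_iff (x y : ℚ) :
    x - y = 1 / ((x.den : ℚ) * (y.den : ℚ)) ↔
      x.num * (y.den : ℤ) - y.num * (x.den : ℤ) = 1 := by
  have hx : (0:ℚ) < (x.den : ℚ) := by exact_mod_cast x.den_pos
  have hy : (0:ℚ) < (y.den : ℚ) := by exact_mod_cast y.den_pos
  have key : (x - y) * ((x.den : ℚ) * (y.den : ℚ)) =
      (x.num : ℚ) * (y.den : ℚ) - (y.num : ℚ) * (x.den : ℚ) := by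
    rw [sub_mul, show x * ((x.den : ℚ) * y.den) = x * x.den * y.den by ring,
      show y * ((x.den : ℚ) * y.den) = y * y.den * x.den by ring,
      Rat.mul_den_eq_num, Rat.mul_den_eq_num]
  rw [eq_div_iff (by positivity), key]
  constructor
  · intro h; exact_mod_cast h
  · intro h; exact_mod_cast h


lemma cross_trans (x y z : ℚ)
    (h1 : x.num * (y.den : ℤ) - y.num * (x.den : ℤ) = 1)
    (h2 : y.num * (z.den : ℤ) - z.num * (y.den : ℤ) = 1) :
    (x.num * (z.den : ℤ) - z.num * (x.den : ℤ)) * (y.den : ℤ)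
      = (x.den : ℤ) + (z.den : ℤ) := by
  linear_combination (z.den : ℤ) * h1 + (x.den : ℤ) * h2

lemma triple_ineq (x y z : ℚ)
    (h1 : x.num * (y.den : ℤ) - y.num * (x.den : ℤ) = 1)
    (h2 : y.num * (z.den : ℤ) - z.num * (y.den : ℤ) = 1)
    (hne : x.num * (z.den : ℤ) - z.num * (x.den : ℤ) ≠ 1) :
    2 * (y.den : ℤ) ≤ (x.den : ℤ) + (z.den : ℤ) := by
  have hmy := cross_trans x y z h1 h2
  have hyd : (0:ℤ) < (y.den : ℤ) := by exact_mod_cast y.den_pos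
  have hxd : (0:ℤ) < (x.den : ℤ) := by exact_mod_cast x.den_pos
  have hzd : (0:ℤ) < (z.den : ℤ) := by exact_mod_cast z.den_pos
  have hm1 : 1 ≤ x.num * (z.den : ℤ) - z.num * (x.den : ℤ) := by nlinarith
  have hm2 : 2 ≤ x.num * (z.den : ℤ) - z.num * (x.den : ℤ) := by
    rcases lt_or_eq_of_le hm1 with h | h
    · omega
    · exact absurd h.symm hne
  nlinarith

lemma num_step (x y : ℚ) (k : ℤ)
    (h1 : x.num * (y.den : ℤ) - y.num * (x.den : ℤ) = 1)
    (hd : (y.den : ℤ) ≤ (x.den : ℤ)) (hk : 0 ≤ k) (hky : k ≤ y.num) :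
    k + 1 ≤ x.num := by
  have hyd : (0:ℤ) < (y.den : ℤ) := by exact_mod_cast y.den_pos
  have hxd : (0:ℤ) < (x.den : ℤ) := by exact_mod_cast x.den_pos
  nlinarith

set_option maxHeartbeats 2000000 in
/-- Let `b/c` be a rational number in lowest terms with
`0 < b/c ≤ 1` (`b ≥ 1`, `c ≥ 1`, `gcd(b,c) = 1`).  Then every shortest `1`-path
from `b/c` to `0` has at most `b + 1` entries. -/
theorem shortest_one_path_to_zero_length_le
    (b c : ℕ) (hb : 0 < b) (hc : 0 < c) (hcop : Nat.Coprime b c) (hle : b ≤ c)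
    (l : List ℚ) (hl : IsShortestNPath 1 ((b : ℚ) / (c : ℚ)) 0 l) :
    l.length ≤ b + 1 := by
  obtain ⟨hpath, hmin⟩ := hl
  rw [isNPath_one_iff] at hpath
  obtain ⟨hhead, hlast, hchain⟩ := hpath
  set a : ℚ := (b : ℚ) / (c : ℚ) with ha
  have hlen : 0 < l.length := by
    cases l with
    | nil => simp at hhead
    | cons x xs => simp
  have hget0 : l[0]'hlen = a := by
    rw [List.head?_eq_getElem?, List.getElem?_eq_getElem hlen] at hhead
    exact Option.some_injective _ hhead
  have hgetlast : l[l.length - 1]'(by omega) = 0 := by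
    rw [List.getLast?_eq_getElem?,
      List.getElem?_eq_getElem (show l.length - 1 < l.length by omega)] at hlast
    exact Option.some_injective _ hlast
  have hstep : ∀ i (h : i + 1 < l.length), R1 (l[i]'(by omega)) (l[i+1]'h) := by
    unfold List.Chain' at hchain; rw [List.isChain_iff_getElem] at hchain
    intro i h
    simpa using hchain i (by omega)
  clear hhead hlast hchain
  have hnskip : ∀ i (h : i + 2 < l.length),
      ¬ ((l[i]'(by omega)).num * ((l[i+2]'h).den : ℤ)
          - (l[i+2]'h).num * ((l[i]'(by omega)).den : ℤ) = 1) := by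
    intro i h hme
    have hxz : R1 (l[i]'(by omega)) (l[i+2]'h) := by
      refine ⟨lt_trans (hstep (i+1) (by omega)).1 (hstep i (by omega)).1, ?_⟩
      exact (cross_iff _ _).mpr hme
    have hlen' : (l.eraseIdx (i+1)).length = l.length - 1 := by
      rw [List.length_eraseIdx]
      simp [show i + 1 < l.length by omega]
    have hget' : ∀ j (hj : j < (l.eraseIdx (i+1)).length),
        (l.eraseIdx (i+1))[j] =
          if j < i + 1 then l[j]'(by omega) else l[j+1]'(by omega) := by
      intro j hj
      rw [List.getElem_eraseIdx]
      by_cases hcc : j < i + 1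
      · rw [dif_pos hcc, if_pos hcc]
      · rw [dif_neg hcc, if_neg hcc]
    have hhead' : (l.eraseIdx (i+1)).head? = some a := by
      rw [List.head?_eq_getElem?,
        List.getElem?_eq_getElem (show 0 < (l.eraseIdx (i+1)).length by omega),
        hget' 0 (by omega)]
      rw [if_pos (by omega)]
      rw [hget0]
    have hlast' : (l.eraseIdx (i+1)).getLast? = some 0 := by
      rw [List.getLast?_eq_getElem?,
        List.getElem?_eq_getElem
          (show (l.eraseIdx (i+1)).length - 1 < (l.eraseIdx (i+1)).length by omega),
        hget' _ (by omega)]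
      rw [if_neg (by omega)]
      simp only [show (l.eraseIdx (i+1)).length - 1 + 1 = l.length - 1 by omega, hgetlast]
    have hchain' : (l.eraseIdx (i+1)).Chain' R1 := by
      unfold List.Chain'; rw [List.isChain_iff_getElem]
      intro j hj
      try simp only [List.get_eq_getElem]
      rw [hget' j (by omega), hget' (j+1) (by omega)]
      rcases lt_trichotomy j i with hji | hji | hji
      · rw [if_pos (by omega), if_pos (by omega)]
        exact hstep j (by omega)
      · subst hji
        rw [if_pos (by omega), if_neg (by omega)]
        exact hxz
      · rw [if_neg (by omega), if_neg (by omega)]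
        exact hstep (j+1) (by omega)
    have hmema : a ∈ l.eraseIdx (i+1) :=
      List.mem_of_mem_head? (by rw [hhead']; exact rfl)
    have hmem0 : (0:ℚ) ∈ l.eraseIdx (i+1) := by
      obtain ⟨hne', he⟩ := List.mem_getLast?_eq_getLast
        (show (0:ℚ) ∈ (l.eraseIdx (i+1)).getLast? by rw [hlast']; exact rfl)
      rw [he]; exact List.getLast_mem hne'
    have hnel : l.eraseIdx (i+1) ≠ l := by
      intro he
      have : (l.eraseIdx (i+1)).length = l.length := by rw [he]
      omega
    exact hmin _ (List.eraseIdx_sublist l (i+1)) hnel hmema hmem0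
      ((isNPath_one_iff _ _ _).mpr ⟨hhead', hlast', hchain'⟩)
  have hcross : ∀ i (h : i + 1 < l.length),
      (l[i]'(by omega)).num * ((l[i+1]'h).den : ℤ)
        - (l[i+1]'h).num * ((l[i]'(by omega)).den : ℤ) = 1 := by
    intro i h
    exact (cross_iff _ _).mp (hstep i h).2
  have htriple : ∀ i (h : i + 2 < l.length),
      2 * ((l[i+1]'(by omega)).den : ℤ) ≤ ((l[i]'(by omega)).den : ℤ) + ((l[i+2]'h).den : ℤ) := by
    intro i h
    have h1 := hcross i (by omega)
    have h2 := hcross (i+1) (by omega)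
    simp only [show i + 1 + 1 = i + 2 by omega] at h2
    exact triple_ineq _ _ _ h1 h2 (hnskip i h)
  -- denominators nonincreasing
  have hden : ∀ i (h : i + 1 < l.length),
      ((l[i+1]'h).den : ℤ) ≤ ((l[i]'(by omega)).den : ℤ) := by
    intro i h
    by_contra hcon
    push_neg at hcon
    have mono : ∀ j, i ≤ j → ∀ (hj : j + 1 < l.length),
        ((l[i+1]'h).den : ℤ) - ((l[i]'(by omega)).den : ℤ) ≤
          ((l[j+1]'hj).den : ℤ) - ((l[j]'(by omega)).den : ℤ) := by
      intro j hij
      induction j, hij using Nat.le_induction with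
      | base => intro _; exact le_refl _
      | succ n hn ih =>
        intro hj
        have hn1 : n + 1 < l.length := by omega
        have ht := htriple n (by omega)
        simp only [show n + 1 + 1 = n + 2 from rfl]
        have := ih hn1
        omega
    have hL2 : l.length - 2 + 1 < l.length := by omega
    have hmono := mono (l.length - 2) (by omega) hL2
    have hlast_den : ((l[l.length - 2 + 1]'hL2).den : ℤ) = 1 := by
      simp only [show l.length - 2 + 1 = l.length - 1 by omega, hgetlast]
      simp
    have hd2 : (0:ℤ) < ((l[l.length - 2]'(by omega)).den : ℤ) := by
      exact_mod_cast (l[l.length - 2]'(by omega)).den_pos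
    omega
  -- numerator growth
  have hnum : ∀ k, k ≤ l.length - 1 →
      (k : ℤ) ≤ (l[l.length - 1 - k]'(by omega)).num := by
    intro k
    induction k with
    | zero => intro _; simp [hgetlast]
    | succ k ih =>
      intro hk
      have ihk := ih (by omega)
      set i := l.length - 1 - (k+1) with hi
      have hii : i + 1 = l.length - 1 - k := by omega
      have hi1 : i + 1 < l.length := by omega
      have h1 := hcross i hi1
      have h2 := hden i hi1
      have hyd : (0:ℤ) < ((l[i+1]'hi1).den : ℤ) := by
        exact_mod_cast (l[i+1]'hi1).den_pos
      have hxd : (0:ℤ) < ((l[i]'(by omega)).den : ℤ) := by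
        exact_mod_cast (l[i]'(by omega)).den_pos
      have hny : (k:ℤ) ≤ (l[i+1]'hi1).num := by
        simp only [hii]
        exact ihk
      have hknn : (0:ℤ) ≤ (k:ℤ) := Int.ofNat_nonneg k
      push_cast
      exact num_step _ _ _ h1 h2 hknn hny
  have hb0 : (l[0]'hlen).num = (b : ℤ) := by
    rw [hget0, ha]
    rw [show ((b:ℚ)) = ((b:ℤ):ℚ) by push_cast; ring,
        show ((c:ℚ)) = ((c:ℤ):ℚ) by push_cast; ring]
    rw [Rat.num_div_eq_of_coprime (by exact_mod_cast hc) (by simpa using hcop)]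
  have hfin := hnum (l.length - 1) (le_refl _)
  simp only [Nat.sub_self] at hfin
  rw [hb0] at hfin
  omega
end
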